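/- arXiv:1312.4037 — 7 statements merged into one kernel-verified Lean document; each statement's English description precedes it below -/
import Mathlib

section
/- Let x, y, n, q be integers with |x| > 1, |y| > 1, n > 2, q ≥ 2, n odd, satisfying (x^n − 1)/(x − 1) = y^q. If D is a positive divisor of n satisfying gcd(D, n/D) = 1 and gcd(D, Q_{n/D}) = 1, then there exist integers y1 and y2 with y1·y2 = y, y1^q = ((x^D)^(n/D) − 1)/(x^D − 1) and y2^q = (x^D − 1)/(x − 1). -/
open Finset

lemma shorey_aux_abs_pow (d A : ℤ) (q : ℕ) (h : Associated (d ^ q) A) (hA : 0 < A) :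
    |d| ^ q = A := by
  have h1 : (d ^ q).natAbs = A.natAbs := Int.associated_iff_natAbs.mp h
  have h2 : |d ^ q| = |A| := by rw [Int.abs_eq_natAbs, Int.abs_eq_natAbs, h1]
  rwa [abs_pow, abs_of_pos hA] at h2

lemma shorey_aux_coprime (x : ℤ) (D N : ℕ) (hD : 0 < D)
    (hcop1 : Nat.gcd D N = 1)
    (hcop2 : Nat.gcd D (Nat.totient (N.primeFactors.prod id)) = 1) :
    IsCoprime (∑ i ∈ range N, (x ^ D) ^ i) (∑ i ∈ range D, x ^ i) := by
  set A := ∑ i ∈ range N, (x ^ D) ^ i with hA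
  set B := ∑ i ∈ range D, x ^ i with hB
  rw [Int.isCoprime_iff_gcd_eq_one]
  by_contra hg
  obtain ⟨p, pp, hpg⟩ := Nat.exists_prime_and_dvd hg
  have hpA : (p : ℤ) ∣ A := (Int.natCast_dvd_natCast.mpr hpg).trans (Int.gcd_dvd_left A B)
  have hpB : (p : ℤ) ∣ B := (Int.natCast_dvd_natCast.mpr hpg).trans (Int.gcd_dvd_right A B)
  haveI : Fact p.Prime := ⟨pp⟩
  set X := (x : ZMod p) with hX
  have hBp : (∑ i ∈ range D, X ^ i) = 0 := by
    have := (ZMod.intCast_zmod_eq_zero_iff_dvd B p).mpr hpB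
    rw [hB] at this; push_cast at this; exact this
  have hAp : (∑ i ∈ range N, (X ^ D) ^ i) = 0 := by
    have := (ZMod.intCast_zmod_eq_zero_iff_dvd A p).mpr hpA
    rw [hA] at this; push_cast at this; exact this
  have hXD : X ^ D = 1 := by
    have h1 := geom_sum_mul X D
    rw [hBp, zero_mul] at h1
    have := sub_eq_zero.mp h1.symm
    linear_combination this
  have hpN : p ∣ N := by
    rw [hXD] at hAp
    simp only [one_pow, Finset.sum_const, card_range, nsmul_eq_mul, mul_one] at hAp
    exact (ZMod.natCast_eq_zero_iff N p).mp hAp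
  have hN0 : N ≠ 0 := by
    rintro rfl
    rw [Nat.gcd_zero_right] at hcop1
    rw [hcop1] at hBp
    simp at hBp
  have hpmem : p ∈ N.primeFactors := Nat.mem_primeFactors.mpr ⟨pp, hpN, hN0⟩
  have hrad : N.primeFactors.prod id = p * (N.primeFactors.erase p).prod id :=
    (Finset.mul_prod_erase _ _ hpmem).symm
  have hcopr : Nat.Coprime p ((N.primeFactors.erase p).prod id) :=
    Nat.Coprime.prod_right fun r hr =>
      (Nat.coprime_primes pp (Nat.prime_of_mem_primeFactors (Finset.mem_of_mem_erase hr))).mpr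
        (Ne.symm (Finset.ne_of_mem_erase hr))
  have hdvdQ : (p - 1) ∣ Nat.totient (N.primeFactors.prod id) := by
    rw [hrad, Nat.totient_mul hcopr, Nat.totient_prime pp]
    exact Dvd.intro _ rfl
  have hX0 : X ≠ 0 := by
    intro h0
    rw [h0, zero_pow hD.ne'] at hXD
    exact zero_ne_one hXD
  have hord1 : orderOf X ∣ D := orderOf_dvd_of_pow_eq_one hXD
  have hord2 : orderOf X ∣ p - 1 :=
    orderOf_dvd_of_pow_eq_one (ZMod.pow_card_sub_one_eq_one hX0)
  have hord : orderOf X ∣ 1 := by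
    rw [← hcop2]
    exact Nat.dvd_gcd hord1 (hord2.trans hdvdQ)
  have hX1 : X = 1 := orderOf_eq_one_iff.mp (Nat.dvd_one.mp hord)
  rw [hX1] at hBp
  simp only [one_pow, Finset.sum_const, card_range, nsmul_eq_mul, mul_one] at hBp
  have hpD : p ∣ D := (ZMod.natCast_eq_zero_iff D p).mp hBp
  have : p ∣ 1 := hcop1 ▸ Nat.dvd_gcd hpD hpN
  exact pp.one_lt.ne' (Nat.dvd_one.mp this)


/-- **Lemma (Shorey).** Let `x, y, n, q` be integers with `|x| > 1`, `|y| > 1`,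
`n > 2`, `q ≥ 2`, `n` odd, satisfying `(x^n − 1)/(x − 1) = y^q`.  If `D` is a positive
divisor of `n` satisfying `gcd(D, n/D) = 1` and `gcd(D, Q_{n/D}) = 1` (where
`Q_m = φ(G(m))` with `G(m)` the radical of `m`, i.e. the product of the distinct
primes dividing `m`), then there are integers `y₁`, `y₂` with `y₁y₂ = y`,
`y₁^q = ((x^D)^(n/D) − 1)/(x^D − 1)` and `y₂^q = (x^D − 1)/(x − 1)`. -/
theorem shorey_factorization_lemma
    (x y : ℤ) (n q D : ℕ)
    (hx : 1 < |x|) (hy : 1 < |y|) (hn : 2 < n) (hq : 2 ≤ q) (hodd : Odd n)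
    (heq : x ^ n - 1 = (x - 1) * y ^ q)
    (hD : 0 < D) (hDn : D ∣ n)
    (hcop1 : Nat.gcd D (n / D) = 1)
    (hcop2 : Nat.gcd D (Nat.totient ((n / D).primeFactors.prod id)) = 1) :
    ∃ y₁ y₂ : ℤ, y₁ * y₂ = y ∧
      (x ^ D) ^ (n / D) - 1 = (x ^ D - 1) * y₁ ^ q ∧
      x ^ D - 1 = (x - 1) * y₂ ^ q := by
  set N := n / D with hNdef
  have hnDN : D * N = n := Nat.mul_div_cancel' hDn
  have hodds : Odd D ∧ Odd N := Nat.odd_mul.mp (hnDN ▸ hodd)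
  set A := ∑ i ∈ range N, (x ^ D) ^ i with hAdef
  set B := ∑ i ∈ range D, x ^ i with hBdef
  have hgB : B * (x - 1) = x ^ D - 1 := geom_sum_mul x D
  have hgA : A * (x ^ D - 1) = (x ^ D) ^ N - 1 := geom_sum_mul (x ^ D) N
  have hxn : (x ^ D) ^ N = x ^ n := by rw [← pow_mul, hnDN]
  have hx1 : x - 1 ≠ 0 := by
    intro h
    rw [sub_eq_zero.mp h] at hx
    norm_num at hx
  have hAB : A * B = y ^ q := by
    have h1 : (x - 1) * (A * B) = (x ^ D) ^ N - 1 := by rw [← hgA, ← hgB]; ring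
    rw [hxn, heq] at h1
    exact mul_left_cancel₀ hx1 h1
  have hApos : 0 < A := hodds.2.geom_sum_pos
  have hBpos : 0 < B := hodds.1.geom_sum_pos
  have hcop := shorey_aux_coprime x D N hD hcop1 hcop2
  obtain ⟨d1, hd1⟩ := exists_associated_pow_of_mul_eq_pow' hcop hAB
  obtain ⟨d2, hd2⟩ := exists_associated_pow_of_mul_eq_pow' hcop.symm (by rw [mul_comm]; exact hAB)
  have ha : |d1| ^ q = A := shorey_aux_abs_pow d1 A q hd1 hApos
  have hb : |d2| ^ q = B := shorey_aux_abs_pow d2 B q hd2 hBpos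
  set a := |d1| with hadef
  set b := |d2| with hbdef
  have hq0 : q ≠ 0 := by omega
  have hapos : 0 < a := by
    rcases (abs_nonneg d1).lt_or_eq with h | h
    · exact h
    · exfalso; rw [hadef, ← h, zero_pow hq0] at ha; exact hApos.ne ha
  have hbpos : 0 < b := by
    rcases (abs_nonneg d2).lt_or_eq with h | h
    · exact h
    · exfalso; rw [hbdef, ← h, zero_pow hq0] at hb; exact hBpos.ne hb
  have habq : (a * b) ^ q = y ^ q := by rw [mul_pow, ha, hb, hAB]
  have hyabs : a * b = |y| := by
    have h1 : (a * b) ^ q = |y| ^ q := by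
      rw [habq, ← abs_pow]
      exact (abs_of_pos (habq ▸ pow_pos (mul_pos hapos hbpos) q)).symm
    exact pow_left_strictMonoOn₀ hq0 |>.injOn
      (Set.mem_setOf.mpr (mul_pos hapos hbpos).le)
      (Set.mem_setOf.mpr (abs_nonneg y)) h1
  have goalA : (x ^ D) ^ N - 1 = (x ^ D - 1) * a ^ q := by rw [ha, ← hgA]; ring
  have goalB : x ^ D - 1 = (x - 1) * b ^ q := by rw [hb, ← hgB]; ring
  rcases le_or_gt 0 y with hy0 | hy0
  · exact ⟨a, b, by rw [hyabs, abs_of_nonneg hy0], goalA, goalB⟩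
  · have hqeven : Even q := by
      rcases Nat.even_or_odd q with h | h
      · exact h
      · exfalso
        have : y ^ q < 0 := h.pow_neg hy0
        rw [← habq] at this
        exact absurd this (not_lt.mpr (pow_pos (mul_pos hapos hbpos) q).le)
    refine ⟨-a, b, ?_, ?_, goalB⟩
    · rw [neg_mul, hyabs, abs_of_neg hy0, neg_neg]
    · rw [hqeven.neg_pow]; exact goalA
end

section
/- Let x, y, n, q be integers with |x| > 1, |y| > 1, n > 2, q ≥ 2, n odd, satisfying (x^n − 1)/(x − 1) = y^q, and write n = p_1^{α_1} ⋯ p_k^{α_k} with primes p_1 < p_2 < ⋯ < p_k and positive integers α_i. Then for each 1 ≤ s ≤ k there exists δ_s ∈ {0, 1} such that: for every 0 ≤ t ≤ α_s − 1, setting M_{s,t} = p_s^t · p_{s+1}^{α_{s+1}} ⋯ p_k^{α_k}, there exists an integer y_{s,t} with (x^{p_s · M_{s,t}} − 1)/(x^{M_{s,t}} − 1) = p_s^{δ_s} · y_{s,t}^q; moreover, if δ_s = 1 then q divides α_s. -/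
open Finset

lemma ord_dvd_iff (r : ℕ) [Fact r.Prime] (x : ℤ) (m : ℕ) :
    (r:ℤ) ∣ x ^ m - 1 ↔ orderOf (x : ZMod r) ∣ m := by
  haveI : NeZero r := ⟨(Fact.out : r.Prime).pos.ne'⟩
  rw [← ZMod.intCast_zmod_eq_zero_iff_dvd, orderOf_dvd_iff_pow_eq_one]
  push_cast
  rw [sub_eq_zero]

lemma geom_mod (r : ℕ) [NeZero r] {x : ℤ} {M : ℕ} (pp : ℕ) (h : (r:ℤ) ∣ x ^ M - 1) :
    ((∑ i ∈ range pp, (x ^ M) ^ i : ℤ) : ZMod r) = (pp : ZMod r) := by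
  have h1 : ((x : ZMod r) ^ M) = 1 := by
    have := (ZMod.intCast_zmod_eq_zero_iff_dvd _ r).mpr h
    push_cast at this
    rwa [sub_eq_zero] at this
  push_cast
  simp [h1]

lemma geom_pos {z : ℤ} (hz : 1 < |z|) {pp : ℕ} (hpp : Odd pp) :
    0 < ∑ i ∈ range pp, z ^ i := by
  have h0 : pp ≠ 0 := by rintro rfl; simp at hpp
  have key : (∑ i ∈ range pp, z ^ i) * (z - 1) = z ^ pp - 1 := geom_sum_mul z pp
  rcases lt_abs.mp hz with h | h
  · exact Finset.sum_pos (fun i _ => pow_pos (by linarith) i) (nonempty_range_iff.mpr h0)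
  · have hzneg : z < 0 := by linarith
    have hzp : z ^ pp < 0 := Odd.pow_neg hpp hzneg
    by_contra hcon
    push_neg at hcon
    nlinarith

lemma exists_pow_of_dvd_factorization {m q : ℕ} (hm : m ≠ 0)
    (h : ∀ r, r.Prime → q ∣ m.factorization r) : ∃ c : ℕ, m = c ^ q := by
  refine ⟨m.factorization.prod fun r k => r ^ (k / q), ?_⟩
  conv_lhs => rw [← Nat.factorization_prod_pow_eq_self hm]
  rw [Finsupp.prod, Finsupp.prod, ← Finset.prod_pow]
  refine Finset.prod_congr rfl fun r hr => ?_
  rw [← pow_mul, Nat.div_mul_cancel]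
  exact h r (Nat.prime_of_mem_primeFactors (by rwa [Nat.support_factorization] at hr))

lemma lte_val {r : ℕ} (hr : r.Prime) (hodd : Odd r) {x : ℤ}
    (hrx : ¬ (r:ℤ) ∣ x) {e m : ℕ} (hdvd : (r:ℤ) ∣ x ^ e - 1)
    (hxe : x ^ e ≠ 1) (hxm : x ^ m ≠ 1)
    (hem : e ∣ m) (hm : m ≠ 0) (hre : ¬ r ∣ e) :
    padicValNat r (x ^ m - 1).natAbs
      = padicValNat r (x ^ e - 1).natAbs + padicValNat r m := by
  haveI := Fact.mk hr
  obtain ⟨c, rfl⟩ := hem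
  have he0 : e ≠ 0 := fun h => hre (by simp [h])
  have hc : c ≠ 0 := fun h => hm (by simp [h])
  have hrxe : ¬ (r:ℤ) ∣ x ^ e := fun h => hrx ((Nat.prime_iff_prime_int.mp hr).dvd_of_dvd_pow h)
  have hl := Int.emultiplicity_pow_sub_pow hr hodd (x := x ^ e) (y := 1) (by simpa using hdvd) hrxe c
  rw [one_pow, ← pow_mul] at hl
  rw [← Int.emultiplicity_natAbs, ← Int.emultiplicity_natAbs] at hl
  have hA : 0 < (x ^ (e * c) - 1).natAbs := Int.natAbs_pos.mpr (sub_ne_zero.mpr hxm)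
  have hB : 0 < (x ^ e - 1).natAbs := Int.natAbs_pos.mpr (sub_ne_zero.mpr hxe)
  rw [← padicValNat_eq_emultiplicity hA.ne', ← padicValNat_eq_emultiplicity hB.ne',
    ← padicValNat_eq_emultiplicity hc] at hl
  have hl' : padicValNat r (x ^ (e * c) - 1).natAbs
      = padicValNat r (x ^ e - 1).natAbs + padicValNat r c := by exact_mod_cast hl
  have hmc : padicValNat r (e * c) = padicValNat r c := by
    rw [padicValNat.mul he0 hc, padicValNat.eq_zero_of_not_dvd hre, zero_add]
  rw [hl', hmc]

/-- **Lemma 2 of the paper.** Let `x, y, n, q` be integers with `|x| > 1`, `|y| > 1`,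
`n > 2`, `q ≥ 2`, `n` odd, satisfying `(x^n − 1)/(x − 1) = y^q`, and write
`n = p₁^{α₁} ⋯ p_k^{α_k}` with primes `p₁ < ⋯ < p_k` and positive exponents `αᵢ`.
Then for each index `s` there exists `δ_s ∈ {0, 1}` such that for every
`0 ≤ t ≤ α_s − 1`, setting `M_{s,t} = p_s^t · ∏_{j > s} p_j^{α_j}`, there is an
integer `y_{s,t}` with `(x^{p_s·M_{s,t}} − 1)/(x^{M_{s,t}} − 1) = p_s^{δ_s}·y_{s,t}^q`;
moreover, if `δ_s = 1` then `q ∣ α_s`. -/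
theorem nagell_ljunggren_tower_lemma
    (x y : ℤ) (n q k : ℕ) (p α : Fin k → ℕ)
    (hx : 1 < |x|) (hy : 1 < |y|) (hn : 2 < n) (hq : 2 ≤ q) (hodd : Odd n)
    (heq : x ^ n - 1 = (x - 1) * y ^ q)
    (hp : ∀ i, (p i).Prime) (hmono : StrictMono p) (hα : ∀ i, 0 < α i)
    (hfac : n = ∏ i, p i ^ α i) :
    ∀ s : Fin k, ∃ δ : ℕ, (δ = 0 ∨ δ = 1) ∧
      (∀ t, t ≤ α s - 1 → ∃ y' : ℤ,
        x ^ (p s * (p s ^ t * ∏ j ∈ Finset.univ.filter (fun j => s < j), p j ^ α j)) - 1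
          = (x ^ (p s ^ t * ∏ j ∈ Finset.univ.filter (fun j => s < j), p j ^ α j) - 1) *
              ((p s : ℤ) ^ δ * y' ^ q)) ∧
      (δ = 1 → q ∣ α s) := by
  intro s
  have hn0 : n ≠ 0 := by omega
  set P := p s with hPdef
  have hPp : P.Prime := hp s
  set N := ∏ j ∈ Finset.univ.filter (fun j => s < j), p j ^ α j with hNdef
  have hN0 : N ≠ 0 := Finset.prod_ne_zero_iff.mpr fun j _ => pow_ne_zero _ (hp j).pos.ne'
  have hNdvd : ∀ ρ : ℕ, ρ.Prime → ρ ∣ N → P < ρ := by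
    intro ρ hρ hdvd
    obtain ⟨j, hj, hdj⟩ := hρ.prime.exists_mem_finset_dvd hdvd
    have hdj' : ρ = p j := (Nat.prime_dvd_prime_iff_eq hρ (hp j)).mp (hρ.dvd_of_dvd_pow hdj)
    have hsj : s < j := (Finset.mem_filter.mp hj).2
    rw [hdj']
    exact hmono hsj
  have hPn : P ^ α s ∣ n := hfac ▸ Finset.dvd_prod_of_mem _ (Finset.mem_univ s)
  have hPdvdn : P ∣ n := dvd_trans (dvd_pow_self P (hα s).ne') hPn
  have hPodd : Odd P := by
    rcases hPp.eq_two_or_odd' with h2 | h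
    · exfalso
      rw [h2] at hPdvdn
      obtain ⟨c, hc⟩ := hPdvdn
      have h1 := Nat.odd_iff.mp hodd
      omega
    · exact h
  have habs : ∀ m : ℕ, m ≠ 0 → 1 < |x ^ m| := fun m hm => by
    rw [abs_pow]; exact one_lt_pow₀ hx hm
  have hxm_ne : ∀ m : ℕ, m ≠ 0 → x ^ m ≠ 1 := fun m hm h => by
    have := habs m hm; rw [h] at this; simp at this
  have hxm_sub : ∀ m : ℕ, m ≠ 0 → x ^ m - 1 ≠ 0 := fun m hm =>
    sub_ne_zero.mpr (hxm_ne m hm)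
  have hx1' : x - 1 ≠ 0 := by
    have := hxm_sub 1 one_ne_zero; rwa [pow_one] at this
  have hy0 : y.natAbs ≠ 0 := by
    intro h
    rw [Int.natAbs_eq_zero] at h
    rw [h] at hy
    simp at hy
  have hyval : ∀ r : ℕ, r.Prime →
      padicValNat r (x ^ n - 1).natAbs
        = padicValNat r (x - 1).natAbs + q * padicValNat r y.natAbs := by
    intro r hr
    haveI := Fact.mk hr
    have h1 : (x ^ n - 1).natAbs = (x - 1).natAbs * y.natAbs ^ q := by
      rw [heq, Int.natAbs_mul, Int.natAbs_pow]
    rw [h1, padicValNat.mul (Int.natAbs_ne_zero.mpr hx1') (pow_ne_zero q hy0),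
      padicValNat.pow _ q]
  have hval_prod : ∀ (S : Finset (Fin k)) (j : Fin k), j ∈ S →
      padicValNat (p j) (∏ i ∈ S, p i ^ α i) = α j := by
    intro S j hj
    rw [← Nat.factorization_def _ (hp j),
      Nat.factorization_prod (fun i _ => pow_ne_zero _ (hp i).pos.ne'),
      Finset.sum_apply',
      Finset.sum_eq_single j
        (fun i _ hij => by
          rw [Nat.Prime.factorization_pow (hp i), Finsupp.single_apply,
            if_neg (fun h => hij (hmono.injective h))])
        (fun h => absurd hj h),
      Nat.Prime.factorization_pow (hp j), Finsupp.single_apply, if_pos rfl]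
  have hvaln : ∀ j : Fin k, padicValNat (p j) n = α j := by
    intro j
    rw [hfac]
    exact hval_prod Finset.univ j (Finset.mem_univ j)
  have hprime_of_dvd : ∀ r : ℕ, r.Prime → r ∣ n → ∃ i, r = p i := by
    intro r hr hdvd
    rw [hfac] at hdvd
    obtain ⟨i, _, hdi⟩ := hr.prime.exists_mem_finset_dvd hdvd
    exact ⟨i, (Nat.prime_dvd_prime_iff_eq hr (hp i)).mp (hr.dvd_of_dvd_pow hdi)⟩
  have hP2 : 2 ≤ P := hPp.two_le
  -- choose δ
  set δ : ℕ := if (P:ℤ) ∣ x ^ N - 1 then 1 else 0 with hδdef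
  have hδ01 : δ = 0 ∨ δ = 1 := by
    by_cases h : (P:ℤ) ∣ x ^ N - 1 <;> simp [hδdef, h]
  refine ⟨δ, hδ01, ?_, ?_⟩
  · -- main statement for each t
    intro t ht
    have htα : t + 1 ≤ α s := by have := hα s; omega
    set M := P ^ t * N with hMdef
    have hM0 : M ≠ 0 := mul_ne_zero (pow_ne_zero _ hPp.pos.ne') hN0
    have hPM0 : P * M ≠ 0 := mul_ne_zero hPp.pos.ne' hM0
    have hPMn : P * M ∣ n := by
      have h3 : N * (∏ j ∈ Finset.univ.filter (fun j => ¬ s < j), p j ^ α j) = n := by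
        rw [hfac, hNdef]
        exact Finset.prod_filter_mul_prod_filter_not _ _ _
      have h4 : P ^ α s ∣ ∏ j ∈ Finset.univ.filter (fun j => ¬ s < j), p j ^ α j :=
        Finset.dvd_prod_of_mem _ (by simp)
      calc P * M = N * P ^ (t+1) := by rw [hMdef]; ring
        _ ∣ N * P ^ α s := mul_dvd_mul_left N (pow_dvd_pow _ htα)
        _ ∣ N * ∏ j ∈ Finset.univ.filter (fun j => ¬ s < j), p j ^ α j :=
            mul_dvd_mul_left N h4
        _ = n := h3
    set d : ℤ := ∑ i ∈ range P, (x ^ M) ^ i with hddef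
    have hd_mul : d * (x ^ M - 1) = x ^ (P * M) - 1 := by
      rw [hddef, geom_sum_mul, ← pow_mul, mul_comm M P]
    have hd_pos : 0 < d := geom_pos (habs M hM0) hPodd
    have hd0 : d ≠ 0 := hd_pos.ne'
    have hdvd_d : d ∣ x ^ (P * M) - 1 := ⟨x ^ M - 1, hd_mul.symm⟩
    set D := d.natAbs with hDdef
    have hD0 : D ≠ 0 := Int.natAbs_ne_zero.mpr hd0
    have hdD : (D : ℤ) = d := Int.natAbs_of_nonneg hd_pos.le
    have hDmul : D * (x ^ M - 1).natAbs = (x ^ (P * M) - 1).natAbs := by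
      rw [hDdef, ← Int.natAbs_mul, hd_mul]
    -- Claim A
    have claimA : ∀ r : ℕ, r.Prime → r ≠ P → q ∣ D.factorization r := by
      intro r hr hrP
      haveI := Fact.mk hr
      rw [Nat.factorization_def _ hr]
      by_cases hrd : (r:ℤ) ∣ d
      · have hrPM : (r:ℤ) ∣ x ^ (P * M) - 1 := hrd.trans hdvd_d
        have hrx : ¬ (r:ℤ) ∣ x := by
          intro h
          have h2 : (r:ℤ) ∣ x ^ (P * M) := dvd_pow h hPM0
          have h3 : (r:ℤ) ∣ 1 := by
            have := dvd_sub h2 hrPM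
            simpa using this
          have h4 := Int.le_of_dvd one_pos h3
          have h5 : (2:ℤ) ≤ (r:ℤ) := by exact_mod_cast hr.two_le
          omega
        set e := orderOf (x : ZMod r) with hedef
        have hePM : e ∣ P * M := (ord_dvd_iff r x (P * M)).mp hrPM
        have heM : ¬ e ∣ M := by
          intro h
          have hxM : (r:ℤ) ∣ x ^ M - 1 := (ord_dvd_iff r x M).mpr h
          have h1 : ((d : ℤ) : ZMod r) = (P : ZMod r) := geom_mod r P hxM
          have h2 : ((d : ℤ) : ZMod r) = 0 := (ZMod.intCast_zmod_eq_zero_iff_dvd _ _).mpr hrd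
          have h3 : (P : ZMod r) = 0 := by rw [← h1, h2]
          have h4 : r ∣ P := (ZMod.natCast_eq_zero_iff _ _).mp h3
          exact hrP ((Nat.prime_dvd_prime_iff_eq hr hPp).mp h4)
        have he0 : e ≠ 0 := by
          intro h
          rw [h] at hePM
          exact hPM0 (zero_dvd_iff.mp hePM)
        have he1 : e ≠ 1 := fun h => heM (h ▸ one_dvd M)
        have hPe : P ∣ e := by
          by_contra h
          have hcop : Nat.Coprime e P := (hPp.coprime_iff_not_dvd.mpr h).symm
          exact heM (hcop.dvd_of_dvd_mul_left hePM)
        have hxr0 : (x : ZMod r) ≠ 0 := fun h =>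
          hrx ((ZMod.intCast_zmod_eq_zero_iff_dvd _ _).mp h)
        have her1 : e ∣ r - 1 :=
          orderOf_dvd_iff_pow_eq_one.mpr (ZMod.pow_card_sub_one_eq_one hxr0)
        have hrodd : Odd r := by
          rcases hr.eq_two_or_odd' with h2 | h
          · exfalso
            rw [h2] at her1
            norm_num at her1
            exact he1 her1
          · exact h
        have hre : ¬ r ∣ e := by
          intro h
          have h1 : r ∣ r - 1 := h.trans her1
          have h2 : 0 < r - 1 := by have := hr.two_le; omega
          have h3 := Nat.le_of_dvd h2 h1
          have := hr.two_le
          omega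
        have hre_dvd : (r:ℤ) ∣ x ^ e - 1 := (ord_dvd_iff r x e).mpr dvd_rfl
        have hen : e ∣ n := hePM.trans hPMn
        have LTE1 := lte_val hr hrodd hrx hre_dvd (hxm_ne e he0) (hxm_ne (P * M) hPM0)
          hePM hPM0 hre
        have LTE2 := lte_val hr hrodd hrx hre_dvd (hxm_ne e he0) (hxm_ne n hn0)
          hen hn0 hre
        have hvx1 : padicValNat r (x - 1).natAbs = 0 := by
          apply padicValNat.eq_zero_of_not_dvd
          intro h
          have h2 : (r:ℤ) ∣ x - 1 := Int.dvd_natAbs.mp (Int.natCast_dvd_natCast.mpr h)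
          have h3 : e ∣ 1 := (ord_dvd_iff r x 1).mp (by rwa [pow_one])
          exact he1 (Nat.dvd_one.mp h3)
        have hvxM : padicValNat r (x ^ M - 1).natAbs = 0 :=
          padicValNat.eq_zero_of_not_dvd (fun h => heM ((ord_dvd_iff r x M).mp
            (Int.dvd_natAbs.mp (Int.natCast_dvd_natCast.mpr h))))
        have hvPM : padicValNat r (P * M) = padicValNat r n := by
          by_cases hrn : r ∣ n
          · obtain ⟨i, rfl⟩ := hprime_of_dvd r hr hrn
            have hPr : P ∣ p i - 1 := hPe.trans her1
            have hPltr : P < p i := by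
              have h2 : P ≤ p i - 1 := Nat.le_of_dvd (by have := hr.two_le; omega) hPr
              have := hr.two_le
              omega
            have hsi : s < i := by
              by_contra h
              push_neg at h
              have h2 : p i ≤ p s := hmono.le_iff_le.mpr h
              rw [← hPdef] at h2
              omega
            rw [hvaln i]
            have hPMeq : P * M = P ^ (t+1) * N := by rw [hMdef]; ring
            rw [hPMeq, padicValNat.mul (pow_ne_zero _ hPp.pos.ne') hN0]
            have h1 : padicValNat (p i) (P ^ (t+1)) = 0 := by
              apply padicValNat.eq_zero_of_not_dvd
              intro h
              have h2 : p i ∣ P := hr.dvd_of_dvd_pow h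
              have h3 : p i = P := (Nat.prime_dvd_prime_iff_eq hr hPp).mp h2
              omega
            have h2 : padicValNat (p i) N = α i := by
              rw [hNdef]
              exact hval_prod _ i (Finset.mem_filter.mpr ⟨Finset.mem_univ i, hsi⟩)
            rw [h1, h2, Nat.zero_add]
          · have h2 : ¬ r ∣ P * M := fun h => hrn (h.trans hPMn)
            rw [padicValNat.eq_zero_of_not_dvd hrn, padicValNat.eq_zero_of_not_dvd h2]
        have hsplit : padicValNat r D + padicValNat r (x ^ M - 1).natAbs
            = padicValNat r (x ^ (P * M) - 1).natAbs := by
          rw [← padicValNat.mul hD0 (Int.natAbs_ne_zero.mpr (hxm_sub M hM0)), hDmul]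
        have hyv := hyval r hr
        have hgoal : padicValNat r D = q * padicValNat r y.natAbs := by omega
        exact ⟨_, hgoal⟩
      · rw [padicValNat.eq_zero_of_not_dvd]
        · exact dvd_zero q
        · intro h
          exact hrd (hdD ▸ Int.natCast_dvd_natCast.mpr h)
    -- Claim B
    have claimB : D.factorization P = δ := by
      haveI := Fact.mk hPp
      rw [Nat.factorization_def _ hPp]
      by_cases hδ' : (P:ℤ) ∣ x ^ N - 1
      · have hδ1 : δ = 1 := by rw [hδdef, if_pos hδ']
        rw [hδ1]
        have hPx : ¬ (P:ℤ) ∣ x := by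
          intro h
          have h2 : (P:ℤ) ∣ x ^ N := dvd_pow h hN0
          have h3 : (P:ℤ) ∣ 1 := by
            have := dvd_sub h2 hδ'
            simpa using this
          have h4 := Int.le_of_dvd one_pos h3
          have h5 : (2:ℤ) ≤ (P:ℤ) := by exact_mod_cast hPp.two_le
          omega
        set e := orderOf (x : ZMod P) with hedef
        have heN : e ∣ N := (ord_dvd_iff P x N).mp hδ'
        have he0 : e ≠ 0 := by
          intro h
          rw [h] at heN
          exact hN0 (zero_dvd_iff.mp heN)
        have heM : e ∣ M := heN.trans ⟨P ^ t, by rw [hMdef]; ring⟩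
        have hePM : e ∣ P * M := heM.trans (dvd_mul_left M P)
        have hxr0 : (x : ZMod P) ≠ 0 := fun h =>
          hPx ((ZMod.intCast_zmod_eq_zero_iff_dvd _ _).mp h)
        have heP1 : e ∣ P - 1 :=
          orderOf_dvd_iff_pow_eq_one.mpr (ZMod.pow_card_sub_one_eq_one hxr0)
        have hPe : ¬ P ∣ e := by
          intro h
          have h1 := Nat.le_of_dvd (by omega : 0 < P - 1) (h.trans heP1)
          omega
        have hre_dvd : (P:ℤ) ∣ x ^ e - 1 := (ord_dvd_iff P x e).mpr dvd_rfl
        have LTEa := lte_val hPp hPodd hPx hre_dvd (hxm_ne e he0) (hxm_ne (P * M) hPM0)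
          hePM hPM0 hPe
        have LTEb := lte_val hPp hPodd hPx hre_dvd (hxm_ne e he0) (hxm_ne M hM0)
          heM hM0 hPe
        have hsplit : padicValNat P D + padicValNat P (x ^ M - 1).natAbs
            = padicValNat P (x ^ (P * M) - 1).natAbs := by
          rw [← padicValNat.mul hD0 (Int.natAbs_ne_zero.mpr (hxm_sub M hM0)), hDmul]
        have hvPM : padicValNat P (P * M) = 1 + padicValNat P M := by
          rw [padicValNat.mul hPp.pos.ne' hM0, padicValNat.self hPp.one_lt]
        omega
      · have hδ0 : δ = 0 := by rw [hδdef, if_neg hδ']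
        rw [hδ0]
        apply padicValNat.eq_zero_of_not_dvd
        intro h
        have hPd : (P:ℤ) ∣ d := hdD ▸ Int.natCast_dvd_natCast.mpr h
        have hPPM : (P:ℤ) ∣ x ^ (P * M) - 1 := hPd.trans hdvd_d
        have hPx : ¬ (P:ℤ) ∣ x := by
          intro h'
          have h2 : (P:ℤ) ∣ x ^ (P * M) := dvd_pow h' hPM0
          have h3 : (P:ℤ) ∣ 1 := by
            have := dvd_sub h2 hPPM
            simpa using this
          have h4 := Int.le_of_dvd one_pos h3
          have h5 : (2:ℤ) ≤ (P:ℤ) := by exact_mod_cast hPp.two_le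
          omega
        set e := orderOf (x : ZMod P) with hedef
        have hePM : e ∣ P * M := (ord_dvd_iff P x (P * M)).mp hPPM
        have hxr0 : (x : ZMod P) ≠ 0 := fun h' =>
          hPx ((ZMod.intCast_zmod_eq_zero_iff_dvd _ _).mp h')
        have heP1 : e ∣ P - 1 :=
          orderOf_dvd_iff_pow_eq_one.mpr (ZMod.pow_card_sub_one_eq_one hxr0)
        have hPe : ¬ P ∣ e := by
          intro h'
          have h1 := Nat.le_of_dvd (by omega : 0 < P - 1) (h'.trans heP1)
          omega
        have hcop : Nat.Coprime e P := by
          have := hPp.coprime_iff_not_dvd.mpr hPe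
          exact this.symm
        have heM : e ∣ M := hcop.dvd_of_dvd_mul_left hePM
        have heN : e ∣ N := by
          have hM' : e ∣ P ^ t * N := hMdef ▸ heM
          exact (hcop.pow_right t).dvd_of_dvd_mul_left hM'
        exact hδ' ((ord_dvd_iff P x N).mpr heN)
    -- assemble
    have hdvdD : P ^ δ ∣ D := claimB ▸ Nat.ordProj_dvd D P
    obtain ⟨m, hmD⟩ := hdvdD
    have hm0 : m ≠ 0 := by
      rintro rfl
      rw [mul_zero] at hmD
      exact hD0 hmD
    have hmfac : ∀ r, r.Prime → q ∣ m.factorization r := by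
      intro r hr
      have hDfac : m = D / P ^ δ := by
        rw [hmD, Nat.mul_div_cancel_left m (pow_pos hPp.pos δ)]
      rw [hDfac, Nat.factorization_div ⟨m, hmD⟩, Finsupp.tsub_apply,
        Nat.Prime.factorization_pow hPp, Finsupp.single_apply]
      by_cases hrP : r = P
      · rw [if_pos hrP.symm, hrP, claimB]
        simp
      · rw [if_neg (fun h => hrP h.symm), Nat.sub_zero]
        exact claimA r hr hrP
    obtain ⟨c, hc⟩ := exists_pow_of_dvd_factorization hm0 hmfac
    refine ⟨(c : ℤ), ?_⟩
    have hDval : (D : ℤ) = (P:ℤ) ^ δ * (c:ℤ) ^ q := by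
      rw [hmD, hc]
      push_cast
      ring
    rw [← hd_mul, ← hdD, hDval]
    ring
  · -- δ = 1 → q ∣ α s
    intro h1
    have hδ' : (P:ℤ) ∣ x ^ N - 1 := by
      by_contra h
      rw [hδdef, if_neg h] at h1
      exact absurd h1 (by norm_num)
    haveI := Fact.mk hPp
    have hPx : ¬ (P:ℤ) ∣ x := by
      intro h
      have h2 : (P:ℤ) ∣ x ^ N := dvd_pow h hN0
      have h3 : (P:ℤ) ∣ 1 := by
        have := dvd_sub h2 hδ'
        simpa using this
      have h4 := Int.le_of_dvd one_pos h3
      have h5 : (2:ℤ) ≤ (P:ℤ) := by exact_mod_cast hPp.two_le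
      omega
    set e := orderOf (x : ZMod P) with hedef
    have heN : e ∣ N := (ord_dvd_iff P x N).mp hδ'
    have hxr0 : (x : ZMod P) ≠ 0 := fun h =>
      hPx ((ZMod.intCast_zmod_eq_zero_iff_dvd _ _).mp h)
    have heP1 : e ∣ P - 1 :=
      orderOf_dvd_iff_pow_eq_one.mpr (ZMod.pow_card_sub_one_eq_one hxr0)
    have he1 : e = 1 := by
      by_contra h
      obtain ⟨ρ, hρ, hρe⟩ := Nat.exists_prime_and_dvd h
      have h2 : P < ρ := hNdvd ρ hρ (hρe.trans heN)
      have h3 : ρ ≤ P - 1 := Nat.le_of_dvd (by omega : 0 < P - 1) (hρe.trans heP1)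
      omega
    have hPx1 : (P:ℤ) ∣ x ^ 1 - 1 := (ord_dvd_iff P x 1).mpr (he1 ▸ dvd_rfl)
    have hP1 : ¬ P ∣ 1 := fun h => hPp.ne_one (Nat.dvd_one.mp h)
    have LTE := lte_val hPp hPodd hPx hPx1 (by rw [pow_one]; intro h; rw [h] at hx; simp at hx)
      (hxm_ne n hn0) (one_dvd n) hn0 hP1
    rw [pow_one] at LTE
    have hyv := hyval P hPp
    have hvn : padicValNat P n = α s := hvaln s
    have hgoal : α s = q * padicValNat P y.natAbs := by omega
    exact ⟨_, hgoal⟩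
end

section
/- Let q be a prime, a an integer with 1 ≤ a ≤ q − 2, and r, s integers with 3 ≤ r < s. For a nonnegative integer n, let a_n = Σ (−1)^{i+j+k} · binom(a/q, i) · binom(1/q, j) · binom(−(a+1)/q, k), the sum taken over all nonnegative integers i, j, k with r·i + s·j + k = n. Then ord_q(a_n) = −n − ord_q(n!); in particular a_n ≠ 0. -/
/-- The generalized binomial coefficient `binom(α, l) = α(α−1)⋯(α−l+1)/l!`
for a rational `α` and a natural number `l`. -/
noncomputable def qbinom (α : ℚ) (l : ℕ) : ℚ :=
  (∏ i ∈ Finset.range l, (α - i)) / (Nat.factorial l)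

/-- The coefficient `a_n = Σ_{ri+sj+k=n} (−1)^{i+j+k} binom(a/q, i) binom(1/q, j)
binom(−(a+1)/q, k)` from the proof of Theorem 2. -/
noncomputable def rungeCoeffA (q a r s n : ℕ) : ℚ :=
  ∑ ijk ∈ (Finset.range (n + 1) ×ˢ Finset.range (n + 1) ×ˢ Finset.range (n + 1)).filter
      (fun ijk : ℕ × ℕ × ℕ => r * ijk.1 + s * ijk.2.1 + ijk.2.2 = n),
    (-1 : ℚ) ^ (ijk.1 + ijk.2.1 + ijk.2.2) *
      qbinom ((a : ℚ) / q) ijk.1 * qbinom (1 / q) ijk.2.1 *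
      qbinom (-((a : ℚ) + 1) / q) ijk.2.2

section aux

variable {p : ℕ} [hp : Fact p.Prime]

lemma aux_qbinom_eq (m : ℤ) (l : ℕ) :
    qbinom ((m : ℚ) / p) l =
      ((∏ i ∈ Finset.range l, (m - i * p) : ℤ) : ℚ) / ((p ^ l * l.factorial : ℕ) : ℚ) := by
  have hp0 : (p : ℚ) ≠ 0 := Nat.cast_ne_zero.2 hp.out.ne_zero
  unfold qbinom
  have h : ∀ i ∈ Finset.range l, (m : ℚ) / p - i = ((m - i * p : ℤ) : ℚ) / p := by
    intro i _
    push_cast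
    field_simp
  rw [Finset.prod_congr rfl h, Finset.prod_div_distrib, Finset.prod_const,
    Finset.card_range]
  push_cast
  rw [div_div]

lemma aux_qbinom_val (m : ℤ) (hm : ¬ (p : ℤ) ∣ m) (l : ℕ) :
    qbinom ((m : ℚ) / p) l ≠ 0 ∧
      padicValRat p (qbinom ((m : ℚ) / p) l) =
        -(l : ℤ) - (padicValNat p l.factorial : ℤ) := by
  have hpP : Prime (p : ℤ) := Nat.prime_iff_prime_int.1 hp.out
  set P : ℤ := ∏ i ∈ Finset.range l, (m - i * p) with hP
  have hPd : ¬ (p : ℤ) ∣ P := by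
    intro h
    obtain ⟨i, _, hdvd⟩ := (hpP.dvd_finset_prod_iff _).1 h
    exact hm (by simpa using dvd_add hdvd (dvd_mul_left (p : ℤ) (i : ℤ)))
  have hPne : P ≠ 0 := fun h => hPd (h ▸ dvd_zero _)
  have hden : (p ^ l * l.factorial : ℕ) ≠ 0 :=
    Nat.mul_ne_zero (pow_ne_zero _ hp.out.ne_zero) l.factorial_ne_zero
  have hnum : ((P : ℤ) : ℚ) ≠ 0 := Int.cast_ne_zero.2 hPne
  have hdenQ : ((p ^ l * l.factorial : ℕ) : ℚ) ≠ 0 := Nat.cast_ne_zero.2 hden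
  rw [aux_qbinom_eq m l]
  refine ⟨div_ne_zero hnum hdenQ, ?_⟩
  rw [padicValRat.div hnum hdenQ, padicValRat.of_int, padicValRat.of_nat,
    padicValInt.eq_zero_of_not_dvd hPd,
    padicValNat.mul (pow_ne_zero _ hp.out.ne_zero) l.factorial_ne_zero,
    padicValNat.prime_pow]
  push_cast
  ring

lemma aux_val_sum_lt {ι : Type*} {S : Finset ι} {f : ι → ℚ} {v : ℤ}
    (h : ∀ i ∈ S, f i ≠ 0 → v < padicValRat p (f i)) (h0 : ∑ i ∈ S, f i ≠ 0) :
    v < padicValRat p (∑ i ∈ S, f i) := by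
  classical
  induction S using Finset.induction with
  | empty => simp at h0
  | @insert a S ha ih =>
    rw [Finset.sum_insert ha] at h0 ⊢
    by_cases hfa : f a = 0
    · rw [hfa, zero_add] at h0 ⊢
      exact ih (fun i hi => h i (Finset.mem_insert_of_mem hi)) h0
    by_cases hs : ∑ i ∈ S, f i = 0
    · rw [hs, add_zero]
      exact h a (Finset.mem_insert_self a S) hfa
    have h1 := h a (Finset.mem_insert_self a S) hfa
    have h2 := ih (fun i hi => h i (Finset.mem_insert_of_mem hi)) hs
    exact lt_of_lt_of_le (lt_min h1 h2) (padicValRat.min_le_padicValRat_add h0)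

end aux

/-- **Lemma 3, part (i).** Let `q` be a prime, `a` an integer with `1 ≤ a ≤ q − 2`,
and `r, s` integers with `3 ≤ r < s`.  Then `ord_q(a_n) = −n − ord_q(n!)`; in
particular `a_n ≠ 0`. -/
theorem ord_q_rungeCoeffA
    (q a r s n : ℕ) (hq : q.Prime) (ha1 : 1 ≤ a) (ha2 : a ≤ q - 2)
    (hr : 3 ≤ r) (hrs : r < s) :
    rungeCoeffA q a r s n ≠ 0 ∧
      padicValRat q (rungeCoeffA q a r s n) =
        -(n : ℤ) - (padicValNat q (Nat.factorial n) : ℤ) := by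
  haveI : Fact q.Prime := ⟨hq⟩
  have hq3 : 3 ≤ q := by
    rcases Nat.lt_or_ge q 3 with h | h
    · interval_cases q <;> omega
    · exact h
  -- the three relevant non-divisibilities
  have hda : ¬ (q : ℤ) ∣ (a : ℤ) := by
    rw [Int.natCast_dvd_natCast]
    exact Nat.not_dvd_of_pos_of_lt (by omega) (by omega)
  have hd1 : ¬ (q : ℤ) ∣ (1 : ℤ) := by
    intro h
    have h2 : q ∣ 1 := by exact_mod_cast h
    have := Nat.le_of_dvd one_pos h2
    omega
  have hda1 : ¬ (q : ℤ) ∣ (-(a + 1 : ℤ)) := by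
    rw [Int.dvd_neg]
    have e : ((a : ℤ) + 1) = ((a + 1 : ℕ) : ℤ) := by push_cast; ring
    rw [e, Int.natCast_dvd_natCast]
    exact Nat.not_dvd_of_pos_of_lt (by omega) (by omega)
  -- rewrite the three binomials as instances of aux_qbinom_val
  have e1 : ((a : ℤ) : ℚ) / q = (a : ℚ) / q := by push_cast; ring
  have e2 : ((1 : ℤ) : ℚ) / q = 1 / q := by push_cast; ring
  have e3 : ((-(a + 1 : ℤ) : ℤ) : ℚ) / q = -((a : ℚ) + 1) / q := by push_cast; ring
  have B1 := fun l => aux_qbinom_val (p := q) (a : ℤ) hda l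
  have B2 := fun l => aux_qbinom_val (p := q) 1 hd1 l
  have B3 := fun l => aux_qbinom_val (p := q) (-(a + 1 : ℤ)) hda1 l
  rw [e1] at B1; rw [e2] at B2; rw [e3] at B3
  -- valuation of each term
  set f : ℕ × ℕ × ℕ → ℚ := fun ijk =>
    (-1 : ℚ) ^ (ijk.1 + ijk.2.1 + ijk.2.2) *
      qbinom ((a : ℚ) / q) ijk.1 * qbinom (1 / q) ijk.2.1 *
      qbinom (-((a : ℚ) + 1) / q) ijk.2.2 with hf
  have hfne : ∀ ijk : ℕ × ℕ × ℕ, f ijk ≠ 0 := by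
    intro ⟨i, j, k⟩
    exact mul_ne_zero (mul_ne_zero (mul_ne_zero (pow_ne_zero _ (by norm_num)) (B1 i).1)
      (B2 j).1) (B3 k).1
  have hsign : ∀ e : ℕ, padicValRat q ((-1 : ℚ) ^ e) = 0 := by
    intro e
    rcases Nat.even_or_odd e with he | he
    · rw [he.neg_one_pow, padicValRat.one]
    · rw [he.neg_one_pow, padicValRat.neg, padicValRat.one]
  have hfval : ∀ ijk : ℕ × ℕ × ℕ, padicValRat q (f ijk) =
      -(ijk.1 + ijk.2.1 + ijk.2.2 : ℤ) -
        ((padicValNat q ijk.1.factorial : ℤ) + padicValNat q ijk.2.1.factorial +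
          padicValNat q ijk.2.2.factorial) := by
    intro ⟨i, j, k⟩
    simp only [hf]
    rw [padicValRat.mul (mul_ne_zero (mul_ne_zero (pow_ne_zero _ (by norm_num)) (B1 i).1)
        (B2 j).1) (B3 k).1,
      padicValRat.mul (mul_ne_zero (pow_ne_zero _ (by norm_num)) (B1 i).1) (B2 j).1,
      padicValRat.mul (pow_ne_zero _ (by norm_num)) (B1 i).1,
      hsign, (B1 i).2, (B2 j).2, (B3 k).2]
    push_cast
    ring
  -- factorial valuation bound
  have hfact : ∀ i j k : ℕ, i + j + k ≤ n →
      padicValNat q i.factorial + padicValNat q j.factorial + padicValNat q k.factorial ≤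
        padicValNat q n.factorial := by
    intro i j k hijk
    have hdvd : i.factorial * j.factorial * k.factorial ∣ n.factorial :=
      (mul_dvd_mul (Nat.factorial_mul_factorial_dvd_factorial_add i j) dvd_rfl).trans
        ((Nat.factorial_mul_factorial_dvd_factorial_add (i + j) k).trans
          (Nat.factorial_dvd_factorial hijk))
    have := (padicValNat_dvd_iff_le (p := q) n.factorial_ne_zero).1
      ((pow_padicValNat_dvd (p := q)
        (n := i.factorial * j.factorial * k.factorial)).trans hdvd)
    rwa [padicValNat.mul (Nat.mul_ne_zero i.factorial_ne_zero j.factorial_ne_zero)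
        k.factorial_ne_zero,
      padicValNat.mul i.factorial_ne_zero j.factorial_ne_zero] at this
  -- the distinguished term
  set S := (Finset.range (n + 1) ×ˢ Finset.range (n + 1) ×ˢ Finset.range (n + 1)).filter
      (fun ijk : ℕ × ℕ × ℕ => r * ijk.1 + s * ijk.2.1 + ijk.2.2 = n) with hS
  set x0 : ℕ × ℕ × ℕ := (0, 0, n) with hx0
  have hx0S : x0 ∈ S := by
    simp [hS, hx0, Finset.mem_filter, Finset.mem_product]
  have hvx0 : padicValRat q (f x0) = -(n : ℤ) - (padicValNat q n.factorial : ℤ) := by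
    rw [hfval x0]
    simp [hx0, Nat.factorial]
  -- the other terms have strictly larger valuation
  have hother : ∀ ijk ∈ S.erase x0, f ijk ≠ 0 →
      -(n : ℤ) - (padicValNat q n.factorial : ℤ) < padicValRat q (f ijk) := by
    rintro ⟨i, j, k⟩ hmem -
    obtain ⟨hne, hmemS⟩ := Finset.mem_erase.1 hmem
    have hcond : r * i + s * j + k = n := (Finset.mem_filter.1 hmemS).2
    have hlt : i + j + k < n := by
      rcases Nat.eq_zero_or_pos i with hi | hi
      · rcases Nat.eq_zero_or_pos j with hj | hj
        · exfalso; apply hne; subst hi hj; simp at hcond; simp [hx0, hcond]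
        · nlinarith
      · nlinarith
    rw [hfval ⟨i, j, k⟩]
    dsimp only
    have h1 : (padicValNat q i.factorial : ℤ) + padicValNat q j.factorial +
        padicValNat q k.factorial ≤ (padicValNat q n.factorial : ℤ) := by
      exact_mod_cast hfact i j k hlt.le
    have h2 : (i : ℤ) + j + k < n := by exact_mod_cast hlt
    omega
  -- split the sum
  have hsplit : rungeCoeffA q a r s n = f x0 + ∑ ijk ∈ S.erase x0, f ijk := by
    rw [rungeCoeffA, ← hS, ← Finset.add_sum_erase S f hx0S]
  by_cases hrest : ∑ ijk ∈ S.erase x0, f ijk = 0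
  · rw [hsplit, hrest, add_zero]
    exact ⟨hfne x0, hvx0⟩
  · have hlt := aux_val_sum_lt (p := q) hother hrest
    rw [← hvx0] at hlt
    have hne0 : f x0 + ∑ ijk ∈ S.erase x0, f ijk ≠ 0 := by
      intro h
      have : ∑ ijk ∈ S.erase x0, f ijk = -f x0 := by linarith [h]
      rw [this, padicValRat.neg] at hlt
      exact lt_irrefl _ hlt
    rw [hsplit]
    exact ⟨hne0, by rw [padicValRat.add_eq_of_lt hne0 (hfne x0) hrest hlt, hvx0]⟩
end

section
/- Let q be a prime, a an integer with 1 ≤ a ≤ q − 2, and r, s integers with 3 ≤ r < s. For a nonnegative integer n, let a_n = Σ (−1)^{i+j+k} · binom(a/q, i) · binom(1/q, j) · binom(−(a+1)/q, k), the sum taken over all nonnegative integers i, j, k with r·i + s·j + k = n. Then q^{n + ⌊n/(q−1)⌋} · a_n is an integer. -/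
theorem factorial_dvd_fallprod (b : ℤ) (l : ℕ) :
    (l.factorial : ℤ) ∣ ∏ i ∈ Finset.range l, (b - i) := by
  have h : ∏ i ∈ Finset.range l, (b - i) = (descPochhammer ℤ l).eval b := by
    induction l with
    | zero => simp
    | succ n ih => rw [Finset.prod_range_succ, ih, descPochhammer_succ_eval]
  rw [h, Polynomial.eval_eq_smeval, Ring.descPochhammer_eq_factorial_smul_choose]
  exact ⟨Ring.choose b l, by simp [nsmul_eq_mul]⟩

theorem lemA (q : ℕ) (hq : q.Prime) (c : ℤ) (l : ℕ) :
    (l.factorial : ℤ) ∣ (q : ℤ) ^ (padicValNat q l.factorial) *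
      ∏ i ∈ Finset.range l, (c - q * i) := by
  set w := padicValNat q l.factorial with hw
  set m := l.factorial / q ^ w with hm
  have hl0 : l.factorial ≠ 0 := Nat.factorial_ne_zero l
  have hfac : l.factorial = q ^ w * m := by
    have := Nat.ordProj_mul_ordCompl_eq_self l.factorial q
    rw [Nat.factorization_def _ hq] at this
    exact this.symm
  have hcop : Nat.Coprime q m := by
    have := Nat.coprime_ordCompl hq hl0
    rwa [Nat.factorization_def _ hq] at this
  have hm0 : m ≠ 0 := by
    intro h; rw [h, mul_zero] at hfac; exact hl0 hfac
  have key : (m : ℤ) ∣ ∏ i ∈ Finset.range l, (c - q * i) := by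
    haveI : NeZero m := ⟨hm0⟩
    rw [← ZMod.intCast_zmod_eq_zero_iff_dvd]
    push_cast
    have hu : IsUnit ((q : ℤ) : ZMod m) := by
      have : IsUnit ((q : ℕ) : ZMod m) := (ZMod.isUnit_iff_coprime q m).mpr hcop
      simpa using this
    set x : ZMod m := hu.unit⁻¹ * (c : ZMod m) with hx
    have hqx : ((q : ℤ) : ZMod m) * x = (c : ZMod m) := by
      rw [hx, ← mul_assoc, IsUnit.mul_val_inv, one_mul]
    have hprod : ∏ i ∈ Finset.range l, ((c : ZMod m) - (q : ℤ) * (i : ℕ))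
        = ((q : ℤ) : ZMod m) ^ l * ∏ i ∈ Finset.range l, (x - (i : ℕ)) := by
      rw [show ((q : ℤ) : ZMod m) ^ l = ∏ _i ∈ Finset.range l, ((q : ℤ) : ZMod m) by
        rw [Finset.prod_const, Finset.card_range], ← Finset.prod_mul_distrib]
      refine Finset.prod_congr rfl fun i _ => ?_
      rw [mul_sub, hqx]
    have hzero : ∏ i ∈ Finset.range l, (x - (i : ℕ)) = 0 := by
      obtain ⟨b, hb⟩ : ∃ b : ℤ, (b : ZMod m) = x := ⟨x.val, by simp [ZMod.intCast_cast]⟩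
      rw [← hb]
      have : ((∏ i ∈ Finset.range l, (b - i) : ℤ) : ZMod m) = 0 := by
        rw [ZMod.intCast_zmod_eq_zero_iff_dvd]
        exact dvd_trans (Int.natCast_dvd_natCast.mpr (hfac ▸ Dvd.intro_left _ rfl))
          (factorial_dvd_fallprod b l)
      rw [← this]
      push_cast
      rfl
    calc (∏ i ∈ Finset.range l, (((c : ℤ) : ZMod m) - ((q : ℕ) : ZMod m) * ((i : ℕ) : ZMod m)))
        = ((q : ℤ) : ZMod m) ^ l * ∏ i ∈ Finset.range l, (x - (i : ℕ)) := by
          rw [← hprod]; push_cast; ring_nf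
      _ = 0 := by rw [hzero, mul_zero]
  calc (l.factorial : ℤ) = (q : ℤ) ^ w * m := by exact_mod_cast congrArg (Nat.cast : ℕ → ℤ) hfac
  _ ∣ (q : ℤ) ^ w * ∏ i ∈ Finset.range l, (c - q * i) := mul_dvd_mul_left _ key

theorem lemC (q : ℕ) (hq : q.Prime) (l : ℕ) :
    padicValNat q l.factorial ≤ l / (q - 1) := by
  haveI : Fact q.Prime := ⟨hq⟩
  have h : padicValNat q l.factorial * (q - 1) = l - (q.digits l).sum := by
    rw [mul_comm]; exact sub_one_mul_padicValNat_factorial (p := q) l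
  have hq1 : 0 < q - 1 := by have := hq.two_le; omega
  rw [Nat.le_div_iff_mul_le hq1]
  omega

theorem lemD (q : ℕ) (hq : q.Prime) (c : ℤ) (l : ℕ) :
    ∃ M : ℤ, (q : ℚ) ^ (l + l / (q - 1)) * qbinom ((c : ℚ) / q) l = (M : ℚ) := by
  set w := padicValNat q l.factorial with hwdef
  have hw : w ≤ l / (q - 1) := lemC q hq l
  obtain ⟨M, hM⟩ := lemA q hq c l
  have hq0 : (q : ℚ) ≠ 0 := Nat.cast_ne_zero.mpr hq.pos.ne'
  have hf0 : (l.factorial : ℚ) ≠ 0 := Nat.cast_ne_zero.mpr (Nat.factorial_ne_zero l)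
  have hM' : (q : ℚ) ^ w * ((∏ i ∈ Finset.range l, (c - q * i) : ℤ) : ℚ)
      = (l.factorial : ℚ) * M := by exact_mod_cast congrArg (Int.cast : ℤ → ℚ) hM
  have hpr : (q : ℚ) ^ l * ∏ i ∈ Finset.range l, ((c : ℚ) / q - i)
      = ((∏ i ∈ Finset.range l, (c - q * i) : ℤ) : ℚ) := by
    rw [show (q : ℚ) ^ l = ∏ _i ∈ Finset.range l, (q : ℚ) by
      rw [Finset.prod_const, Finset.card_range], ← Finset.prod_mul_distrib]
    push_cast
    refine Finset.prod_congr rfl fun i _ => ?_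
    field_simp
  refine ⟨(q : ℤ) ^ (l / (q - 1) - w) * M, ?_⟩
  have hd : l + l / (q - 1) = (l / (q - 1) - w) + w + l := by omega
  calc (q : ℚ) ^ (l + l / (q - 1)) * qbinom ((c : ℚ) / q) l
      = (q : ℚ) ^ (l / (q - 1) - w) *
        ((q : ℚ) ^ w * ((q : ℚ) ^ l * ∏ i ∈ Finset.range l, ((c : ℚ) / q - i))) /
          (l.factorial : ℚ) := by
        rw [qbinom, hd, pow_add, pow_add]; ring
    _ = (q : ℚ) ^ (l / (q - 1) - w) *
        ((q : ℚ) ^ w * ((∏ i ∈ Finset.range l, (c - q * i) : ℤ) : ℚ)) / (l.factorial : ℚ) := by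
        rw [hpr]
    _ = (q : ℚ) ^ (l / (q - 1) - w) * ((l.factorial : ℚ) * M) / (l.factorial : ℚ) := by
        rw [hM']
    _ = (((q : ℤ) ^ (l / (q - 1) - w) * M : ℤ) : ℚ) := by
        push_cast; field_simp

/-- **Lemma 3, part (ii).** Let `q` be a prime, `a` an integer with `1 ≤ a ≤ q − 2`,
and `r, s` integers with `3 ≤ r < s`.  Then `q^{n + ⌊n/(q−1)⌋} · a_n` is an integer. -/
theorem rungeCoeffA_int
    (q a r s n : ℕ) (hq : q.Prime) (ha1 : 1 ≤ a) (ha2 : a ≤ q - 2)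
    (hr : 3 ≤ r) (hrs : r < s) :
    ∃ m : ℤ, (q : ℚ) ^ (n + n / (q - 1)) * rungeCoeffA q a r s n = (m : ℚ) := by
  have key : (q : ℚ) ^ (n + n / (q - 1)) * rungeCoeffA q a r s n ∈ (⊥ : Subring ℚ) := by
    rw [rungeCoeffA, Finset.mul_sum]
    refine sum_mem fun ijk hijk => ?_
    obtain ⟨i, j, k⟩ := ijk
    simp only [Finset.mem_filter] at hijk
    have heq : r * i + s * j + k = n := hijk.2
    have hijkn : i + j + k ≤ n := by
      have h1 : i ≤ r * i := Nat.le_mul_of_pos_left i (by omega)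
      have h2 : j ≤ s * j := Nat.le_mul_of_pos_left j (by omega)
      omega
    have hq1 : 0 < q - 1 := by have := hq.two_le; omega
    have hdiv : ∀ x y : ℕ, x / (q - 1) + y / (q - 1) ≤ (x + y) / (q - 1) := by
      intro x y
      rw [Nat.le_div_iff_mul_le hq1, add_mul]
      exact add_le_add (Nat.div_mul_le_self x _) (Nat.div_mul_le_self y _)
    have hdiv3 : i / (q - 1) + j / (q - 1) + k / (q - 1) ≤ n / (q - 1) := by
      have h1 := hdiv i j
      have h2 := hdiv (i + j) k
      have h3 : (i + j + k) / (q - 1) ≤ n / (q - 1) := Nat.div_le_div_right hijkn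
      omega
    obtain ⟨M1, h1⟩ := lemD q hq (a : ℤ) i
    obtain ⟨M2, h2⟩ := lemD q hq 1 j
    obtain ⟨M3, h3⟩ := lemD q hq (-((a : ℤ) + 1)) k
    rw [Int.cast_natCast] at h1
    rw [Int.cast_one] at h2
    push_cast at h3
    set e1 := i + i / (q - 1) with he1
    set e2 := j + j / (q - 1) with he2
    set e3 := k + k / (q - 1) with he3
    set E := (n + n / (q - 1)) - (e1 + e2 + e3) with hE
    have hsum : n + n / (q - 1) = E + e1 + e2 + e3 := by omega
    rw [Subring.mem_bot]
    refine ⟨(-1) ^ (i + j + k) * (q : ℤ) ^ E * M1 * M2 * M3, ?_⟩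
    have hexp : (q : ℚ) ^ (n + n / (q - 1)) *
        ((-1 : ℚ) ^ (i + j + k) * qbinom ((a : ℚ) / q) i * qbinom (1 / q) j *
          qbinom (-((a : ℚ) + 1) / q) k)
        = (-1 : ℚ) ^ (i + j + k) * (q : ℚ) ^ E *
          (((q : ℚ) ^ e1 * qbinom ((a : ℚ) / q) i) * ((q : ℚ) ^ e2 * qbinom (1 / q) j) *
            ((q : ℚ) ^ e3 * qbinom (-((a : ℚ) + 1) / q) k)) := by
      rw [hsum, pow_add, pow_add, pow_add]; ring
    rw [hexp, h1, h2, h3]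
    push_cast
    ring
  obtain ⟨m, hm⟩ := Subring.mem_bot.mp key
  exact ⟨m, hm.symm⟩
end

section
/- Let p be an odd prime, x an integer, and t a nonnegative integer. Then the p-adic valuation of the integer Σ_{i=0}^{p−1} x^{p^t · i} (which equals (x^{p^{t+1}} − 1)/(x^{p^t} − 1) when x^{p^t} ≠ 1) is equal to 1 if x ≡ 1 (mod p), and is equal to 0 otherwise. -/
/-- Let `p` be an odd prime, `x` an integer, and `t` a nonnegative integer.  Then the
`p`-adic valuation of the integer `Σ_{i=0}^{p−1} x^{pᵗ·i}` (which equals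
`(x^{p^{t+1}} − 1)/(x^{pᵗ} − 1)` when `x^{pᵗ} ≠ 1`) equals `1` if
`x ≡ 1 (mod p)`, and equals `0` otherwise. -/
theorem padicValInt_geom_sum_pow
    (p : ℕ) (x : ℤ) (t : ℕ) (hp : p.Prime) (hodd : Odd p) :
    (x ≡ 1 [ZMOD (p : ℤ)] →
        padicValInt p (∑ i ∈ Finset.range p, x ^ (p ^ t * i)) = 1) ∧
      (¬ x ≡ 1 [ZMOD (p : ℤ)] →
        padicValInt p (∑ i ∈ Finset.range p, x ^ (p ^ t * i)) = 0) := by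
  haveI : Fact p.Prime := ⟨hp⟩
  have hp2 : 2 ≤ p := hp.two_le
  have hnot : ¬ ((p : ℤ)^2 ∣ (p : ℤ)) := by
    intro hdd
    have h1 := Int.le_of_dvd (by positivity) hdd
    have h2 : (2:ℤ) ≤ (p:ℤ) := by exact_mod_cast hp2
    nlinarith
  constructor
  · intro h
    have hd : (p : ℤ) ∣ x - 1 := by
      rw [← ZMod.intCast_eq_intCast_iff] at h
      rw [← ZMod.intCast_zmod_eq_zero_iff_dvd]
      push_cast [h]
      ring
    have hyd : (p : ℤ) ∣ x ^ (p ^ t) - 1 :=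
      hd.trans (by simpa using sub_dvd_pow_sub_pow x 1 (p ^ t))
    obtain ⟨k, hk⟩ := hyd
    have hpdvd : p ∣ ∑ i ∈ Finset.range p, i := by
      have h2' : (∑ i ∈ Finset.range p, i) * 2 = p * (p - 1) :=
        Finset.sum_range_id_mul_two p
      have hpd : p ∣ (∑ i ∈ Finset.range p, i) * 2 := by
        rw [h2']; exact Dvd.intro _ rfl
      rcases (Nat.Prime.dvd_mul hp).mp hpd with h' | h'
      · exact h'
      · exfalso
        have hpe : p = 2 := (Nat.prime_dvd_prime_iff_eq hp Nat.prime_two).mp h'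
        rw [hpe] at hodd
        simp [Nat.odd_iff] at hodd
    obtain ⟨m, hm⟩ := hpdvd
    have key : ((p : ℤ))^2 ∣ (∑ i ∈ Finset.range p, x ^ (p ^ t * i)) - p := by
      have hcast : (((∑ i ∈ Finset.range p, x ^ (p ^ t * i)) - p : ℤ) : ZMod (p^2)) = 0 := by
        push_cast
        have hp20 : ((p : ZMod (p^2)) * (p : ZMod (p^2))) = 0 := by
          have hz : ((p^2 : ℕ) : ZMod (p^2)) = 0 := ZMod.natCast_self _
          push_cast at hz
          linear_combination hz
        have hcR : ((x : ZMod (p^2)))^(p^t) = 1 + (p : ZMod (p^2)) * (k : ZMod (p^2)) := by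
          have hcc := congrArg (fun z : ℤ => (z : ZMod (p^2))) hk
          push_cast at hcc
          linear_combination hcc
        have hpow : ∀ i : ℕ, (x : ZMod (p^2))^(p^t * i)
            = 1 + (i : ZMod (p^2)) * ((p : ZMod (p^2)) * (k : ZMod (p^2))) := by
          intro i
          induction i with
          | zero => simp
          | succ n ih =>
            rw [show p^t*(n+1) = p^t*n + p^t by ring, pow_add, ih, hcR]
            push_cast
            linear_combination ((n : ZMod (p^2)) * (k : ZMod (p^2)) * (k : ZMod (p^2))) * hp20
        rw [Finset.sum_congr rfl fun i _ => hpow i, Finset.sum_add_distrib]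
        simp only [Finset.sum_const, Finset.card_range, nsmul_eq_mul, mul_one]
        have hsum : (∑ i ∈ Finset.range p, (i : ZMod (p^2)) * ((p : ZMod (p^2)) * k))
            = ((∑ i ∈ Finset.range p, i : ℕ) : ZMod (p^2)) * ((p : ZMod (p^2)) * k) := by
          push_cast
          rw [Finset.sum_mul]
        rw [hsum, hm]
        push_cast
        linear_combination ((m : ZMod (p^2)) * (k : ZMod (p^2))) * hp20
      have := (ZMod.intCast_zmod_eq_zero_iff_dvd _ (p^2)).mp hcast
      push_cast at this
      exact this
    have hSne : (∑ i ∈ Finset.range p, x ^ (p ^ t * i)) ≠ 0 := by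
      intro h0
      rw [h0] at key
      simp only [zero_sub, dvd_neg] at key
      exact hnot key
    have h1 : (p : ℤ) ∣ ∑ i ∈ Finset.range p, x ^ (p ^ t * i) := by
      obtain ⟨c, hc⟩ := key
      exact ⟨1 + p * c, by linarith [hc]⟩
    have h2 : ¬ ((p : ℤ)^2 ∣ ∑ i ∈ Finset.range p, x ^ (p ^ t * i)) := by
      intro hdvd
      exact hnot (by simpa using dvd_sub hdvd key)
    have hle : 1 ≤ padicValInt p (∑ i ∈ Finset.range p, x ^ (p ^ t * i)) := by
      rcases (padicValInt_dvd_iff 1 _).mp (by simpa using h1) with h0 | hle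
      · exact absurd h0 hSne
      · exact hle
    have hlt : padicValInt p (∑ i ∈ Finset.range p, x ^ (p ^ t * i)) < 2 := by
      by_contra hge
      push_neg at hge
      exact h2 (by simpa using (padicValInt_dvd_iff 2 _).mpr (Or.inr hge))
    omega
  · intro h
    apply padicValInt.eq_zero_of_not_dvd
    intro hdvd
    have hx1 : (x : ZMod p) ≠ 1 := by
      intro heq
      apply h
      rw [← ZMod.intCast_eq_intCast_iff]
      push_cast
      exact heq
    have hcast : ((∑ i ∈ Finset.range p, x ^ (p ^ t * i) : ℤ) : ZMod p) = 0 :=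
      (ZMod.intCast_zmod_eq_zero_iff_dvd _ p).mpr hdvd
    have hS' : ((∑ i ∈ Finset.range p, x ^ (p ^ t * i) : ℤ) : ZMod p)
        = ∑ i ∈ Finset.range p, (x : ZMod p)^i := by
      push_cast
      exact Finset.sum_congr rfl fun i _ => by rw [mul_comm, pow_mul, ZMod.pow_card_pow]
    have hzero : (∑ i ∈ Finset.range p, (x : ZMod p)^i) = 0 := hS'.symm.trans hcast
    have hgeo := geom_sum_mul (x : ZMod p) p
    rw [hzero, ZMod.pow_card, zero_mul] at hgeo
    exact hx1 (by linear_combination -hgeo)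
end

section
/- Let q ≥ 1 and c be integers with 1 ≤ c ≤ 2q − 1, and let l be a nonnegative integer. Then |binom(−c/q, l)| ≤ l + 1. -/
lemma prod_add_two (l : ℕ) : ∏ i ∈ Finset.range l, ((i:ℚ)+2) = (Nat.factorial (l+1)) := by
  induction l with
  | zero => simp [Nat.factorial]
  | succ n ih =>
      rw [Finset.prod_range_succ, ih, show n+1+1 = (n+1)+1 from rfl, Nat.factorial_succ (n+1)]
      push_cast
      ring

/-- Let `q ≥ 1` and `c` be integers with `1 ≤ c ≤ 2q − 1`, and let `l` be a
nonnegative integer.  Then `|binom(−c/q, l)| ≤ l + 1`. -/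
theorem abs_qbinom_neg_le
    (q c l : ℕ) (hq : 1 ≤ q) (hc1 : 1 ≤ c) (hc2 : c ≤ 2 * q - 1) :
    |qbinom (-(c : ℚ) / q) l| ≤ (l : ℚ) + 1 := by
  set α : ℚ := -(c : ℚ) / q with hα
  have hq0 : (0:ℚ) < q := by exact_mod_cast hq
  have hαneg : α ≤ 0 := by
    apply div_nonpos_of_nonpos_of_nonneg
    · simp [neg_nonpos]
    · positivity
  have hα2 : -2 ≤ α := by
    rw [hα, neg_div, neg_le_neg_iff, div_le_iff₀ hq0]
    have : (c:ℚ) ≤ 2*q - 1 := by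
      have : (c:ℕ) ≤ 2*q - 1 := hc2
      have h2 : 1 ≤ 2*q := by omega
      push_cast [Nat.cast_sub h2] at this ⊢
      exact_mod_cast this
    linarith
  have hfac : (0:ℚ) < (Nat.factorial l : ℚ) := by exact_mod_cast l.factorial_pos
  have hbound : |∏ i ∈ Finset.range l, (α - i)| ≤ (Nat.factorial (l+1) : ℚ) := by
    rw [Finset.abs_prod, ← prod_add_two l]
    apply Finset.prod_le_prod
    · intro i _; exact abs_nonneg _
    · intro i _
      rw [abs_le]
      constructor
      · have : (0:ℚ) ≤ i := by positivity
        linarith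
      · have : (0:ℚ) ≤ i := by positivity
        linarith
  rw [qbinom, abs_div, abs_of_pos hfac, div_le_iff₀ hfac]
  calc |∏ i ∈ Finset.range l, (α - i)| ≤ (Nat.factorial (l+1) : ℚ) := hbound
    _ = ((l:ℚ)+1) * (Nat.factorial l : ℚ) := by
        rw [Nat.factorial_succ]; push_cast; ring
end

section
/- Let p and q be odd primes and let a, b be integers with 0 ≤ a, b ≤ q − 1 and q not dividing a + b + 1. For a nonnegative integer n, let b_n = Σ (−1)^{i+j+k+l} · binom(a/q, i) · binom(b/q, j) · binom(1/q, k) · binom(−(a+b+1)/q, l), the sum taken over all nonnegative integers i, j, k, l with p·i + p^2·j + p^3·k + l = n. Then ord_q(b_n) = −n − ord_q(n!); in particular b_n ≠ 0 and q^{n + ⌊n/(q−1)⌋} · b_n is an integer. -/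
/-- The coefficient `b_n = Σ_{pi+p²j+p³k+l=n} (−1)^{i+j+k+l} binom(a/q, i)
binom(b/q, j) binom(1/q, k) binom(−(a+b+1)/q, l)` from the proof of Theorem 3. -/
noncomputable def rungeCoeffB (p q a b n : ℕ) : ℚ :=
  ∑ v ∈ (Finset.range (n + 1) ×ˢ Finset.range (n + 1) ×ˢ Finset.range (n + 1) ×ˢ
        Finset.range (n + 1)).filter
      (fun v : ℕ × ℕ × ℕ × ℕ => p * v.1 + p ^ 2 * v.2.1 + p ^ 3 * v.2.2.1 + v.2.2.2 = n),
    (-1 : ℚ) ^ (v.1 + v.2.1 + v.2.2.1 + v.2.2.2) *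
      qbinom ((a : ℚ) / q) v.1 * qbinom ((b : ℚ) / q) v.2.1 *
      qbinom (1 / q) v.2.2.1 * qbinom (-((a : ℚ) + b + 1) / q) v.2.2.2

open Finset

/-- `l!` divides any product of `l` consecutive descending integers. -/
private lemma fact_dvd_prod_sub (w : ℤ) (l : ℕ) :
    (Nat.factorial l : ℤ) ∣ ∏ i ∈ range l, (w - i) := by
  have h : ∏ i ∈ range l, (w - i) = (descPochhammer ℤ l).eval w := by
    induction l with
    | zero => simp
    | succ n ih =>
      rw [prod_range_succ, ih, descPochhammer_succ_right]
      simp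
  rw [h, Polynomial.eval_eq_smeval, Ring.descPochhammer_eq_factorial_smul_choose]
  exact ⟨Ring.choose w l, by simp [nsmul_eq_mul]⟩

/-- If `m` is coprime to `q` and divides `l!`, then `m` divides
`∏_{i<l} (c - i q)`. -/
private lemma coprime_dvd_prod_sub_mul {q m : ℕ} (hco : Nat.Coprime m q) (c : ℤ) (l : ℕ)
    (hm : (m : ℤ) ∣ (Nat.factorial l : ℤ)) :
    (m : ℤ) ∣ ∏ i ∈ range l, (c - i * q) := by
  rcases eq_or_ne m 0 with rfl | hm0
  · exfalso
    have h0 : (Nat.factorial l : ℤ) = 0 := by simpa using hm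
    exact Nat.factorial_ne_zero l (by exact_mod_cast h0)
  haveI : NeZero m := ⟨hm0⟩
  rw [← ZMod.intCast_zmod_eq_zero_iff_dvd]
  set u := ZMod.unitOfCoprime q hco.symm with hu
  set x : ZMod m := ↑(u⁻¹) with hx
  have hxq : x * (q : ZMod m) = 1 := by
    have h : (u : ZMod m) = (q : ZMod m) := ZMod.coe_unitOfCoprime q hco.symm
    rw [hx, ← h, ← Units.val_mul, inv_mul_cancel, Units.val_one]
  obtain ⟨w, hw⟩ := ZMod.intCast_surjective (x * (c : ZMod m))
  have hz : ((∏ i ∈ range l, (w - i) : ℤ) : ZMod m) = 0 := by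
    rw [ZMod.intCast_zmod_eq_zero_iff_dvd]
    exact hm.trans (fact_dvd_prod_sub w l)
  have hux : IsUnit (x ^ l) := (Units.isUnit (u⁻¹)).pow l
  suffices hS : x ^ l * ((∏ i ∈ range l, (c - i * q) : ℤ) : ZMod m) = 0 by
    exact hux.mul_right_eq_zero.mp hS
  calc x ^ l * ((∏ i ∈ range l, (c - i * q) : ℤ) : ZMod m)
      = ∏ i ∈ range l, (x * ((c : ZMod m) - (i : ZMod m) * (q : ZMod m))) := by
        push_cast
        rw [Finset.prod_mul_distrib, Finset.prod_const, card_range]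
    _ = ∏ i ∈ range l, ((w : ZMod m) - (i : ZMod m)) := by
        refine Finset.prod_congr rfl fun i _ => ?_
        rw [show x * ((c : ZMod m) - (i : ZMod m) * (q : ZMod m))
            = x * c - i * (x * q) by ring, hxq, mul_one, hw]
    _ = ((∏ i ∈ range l, (w - i) : ℤ) : ZMod m) := by push_cast; rfl
    _ = 0 := hz

/-- The key structure lemma for `qbinom (c/q) l` for `q` prime. -/
private lemma qbinom_div_eq {q : ℕ} (hq : q.Prime) (c : ℤ) (l : ℕ) :
    ∃ m : ℤ, qbinom ((c : ℚ) / q) l = m / (q : ℚ) ^ (l + padicValNat q (Nat.factorial l)) ∧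
      (¬ (q : ℤ) ∣ c → ¬ (q : ℤ) ∣ m) := by
  haveI : Fact q.Prime := ⟨hq⟩
  have hq0 : (q : ℚ) ≠ 0 := by exact_mod_cast hq.ne_zero
  have h1 : qbinom ((c : ℚ) / q) l
      = ((∏ i ∈ range l, (c - i * q) : ℤ) : ℚ) / ((q : ℚ) ^ l * (Nat.factorial l : ℚ)) := by
    unfold qbinom
    have h2 : ∀ i ∈ range l, (c : ℚ) / q - i = ((c - i * q : ℤ) : ℚ) / q := by
      intro i _
      push_cast
      field_simp
      try ring
    rw [Finset.prod_congr rfl h2, Finset.prod_div_distrib, Finset.prod_const, card_range,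
      div_div]
    push_cast
    ring
  set v := padicValNat q (Nat.factorial l) with hv
  set l₀ := ordCompl[q] (Nat.factorial l) with hl₀
  have hfac : (Nat.factorial l).factorization q = v := Nat.factorization_def _ hq
  have hsplit : q ^ v * l₀ = Nat.factorial l := by
    rw [hl₀, ← hfac]
    exact Nat.ordProj_mul_ordCompl_eq_self _ _
  have hl₀0 : l₀ ≠ 0 := (Nat.ordCompl_pos q (Nat.factorial_ne_zero l)).ne'
  have hco : Nat.Coprime l₀ q := (Nat.coprime_ordCompl hq (Nat.factorial_ne_zero l)).symm
  have hl₀dvd : (l₀ : ℤ) ∣ (Nat.factorial l : ℤ) :=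
    Int.natCast_dvd_natCast.mpr (Nat.ordCompl_dvd _ _)
  obtain ⟨m, hm⟩ := coprime_dvd_prod_sub_mul hco c l hl₀dvd
  refine ⟨m, ?_, ?_⟩
  · rw [h1, hm, pow_add]
    have hfq : (Nat.factorial l : ℚ) = (q : ℚ) ^ v * (l₀ : ℚ) := by
      rw [← hsplit]; push_cast; ring
    rw [hfq]
    have hl₀Q : (l₀ : ℚ) ≠ 0 := by exact_mod_cast hl₀0
    push_cast
    field_simp
  · intro hc hdvd
    have hPnd : ¬ (q : ℤ) ∣ ∏ i ∈ range l, (c - i * q) := by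
      rw [← ZMod.intCast_zmod_eq_zero_iff_dvd]
      push_cast
      have h3 : ∀ i ∈ range l, (c : ZMod q) - (i : ZMod q) * (q : ZMod q) = (c : ZMod q) := by
        intro i _
        rw [ZMod.natCast_self, mul_zero, sub_zero]
      rw [Finset.prod_congr rfl h3, Finset.prod_const, card_range]
      have hc0 : (c : ZMod q) ≠ 0 := by
        rwa [Ne, ZMod.intCast_zmod_eq_zero_iff_dvd]
      exact pow_ne_zero l hc0
    apply hPnd
    rw [hm]
    exact Dvd.dvd.mul_left hdvd _

/-- Sums of rationals of the shape `m/q^e` with `d ∣ m` have the same shape. -/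
private lemma sum_int_div {β : Type*} (s : Finset β) (f : β → ℚ) (qQ : ℚ) (e : ℕ) (d : ℤ)
    (h : ∀ v ∈ s, ∃ m : ℤ, d ∣ m ∧ f v = m / qQ ^ e) :
    ∃ M : ℤ, d ∣ M ∧ ∑ v ∈ s, f v = M / qQ ^ e := by
  classical
  revert h
  induction s using Finset.induction_on with
  | empty => exact fun _ => ⟨0, dvd_zero d, by simp⟩
  | insert x s' hx ih =>
    intro h
    obtain ⟨m, hdm, hfm⟩ := h x (mem_insert_self x s')
    obtain ⟨M, hdM, hM⟩ := ih fun v hv => h v (mem_insert_of_mem hv)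
    refine ⟨m + M, dvd_add hdm hdM, ?_⟩
    rw [Finset.sum_insert hx, hfm, hM]
    push_cast
    ring

/-- Let `p` and `q` be odd primes and `a, b` integers with `0 ≤ a, b ≤ q − 1` and
`q ∤ a + b + 1`.  Then `ord_q(b_n) = −n − ord_q(n!)`; in particular `b_n ≠ 0` and
`q^{n + ⌊n/(q−1)⌋} · b_n` is an integer. -/
theorem ord_q_rungeCoeffB
    (p q a b n : ℕ) (hp : p.Prime) (hpodd : Odd p) (hq : q.Prime) (hqodd : Odd q)
    (ha : a ≤ q - 1) (hb : b ≤ q - 1) (hnd : ¬ q ∣ (a + b + 1)) :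
    padicValRat q (rungeCoeffB p q a b n) =
        -(n : ℤ) - (padicValNat q (Nat.factorial n) : ℤ) ∧
      rungeCoeffB p q a b n ≠ 0 ∧
      ∃ m : ℤ, (q : ℚ) ^ (n + n / (q - 1)) * rungeCoeffB p q a b n = (m : ℚ) := by
  haveI : Fact q.Prime := ⟨hq⟩
  have hp2 : p ≠ 2 := by rintro rfl; exact (by decide : ¬ Odd 2) hpodd
  have hp3 : 3 ≤ p := by have := hp.two_le; omega
  have hq0 : (q : ℚ) ≠ 0 := by exact_mod_cast hq.ne_zero
  set V := padicValNat q (Nat.factorial n) with hV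
  set N := n + V with hN
  have mono : ∀ x y : ℕ, x ∣ y → y ≠ 0 → padicValNat q x ≤ padicValNat q y := by
    intro x y hxy hy
    rw [← Nat.factorization_def y hq]
    exact (Nat.Prime.pow_dvd_iff_le_factorization hq hy).mp (pow_padicValNat_dvd.trans hxy)
  -- the main claim
  have claim : ∃ M : ℤ, ¬ (q : ℤ) ∣ M ∧ rungeCoeffB p q a b n = M / (q : ℚ) ^ N := by
    set S := (Finset.range (n + 1) ×ˢ Finset.range (n + 1) ×ˢ Finset.range (n + 1) ×ˢ
          Finset.range (n + 1)).filter
        (fun v : ℕ × ℕ × ℕ × ℕ => p * v.1 + p ^ 2 * v.2.1 + p ^ 3 * v.2.2.1 + v.2.2.2 = n)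
        with hS
    set f : ℕ × ℕ × ℕ × ℕ → ℚ := fun v =>
      (-1 : ℚ) ^ (v.1 + v.2.1 + v.2.2.1 + v.2.2.2) *
        qbinom ((a : ℚ) / q) v.1 * qbinom ((b : ℚ) / q) v.2.1 *
        qbinom (1 / q) v.2.2.1 * qbinom (-((a : ℚ) + b + 1) / q) v.2.2.2 with hf
    have hrB : rungeCoeffB p q a b n = ∑ v ∈ S, f v := rfl
    have hv0 : ((0, 0, 0, n) : ℕ × ℕ × ℕ × ℕ) ∈ S := by
      simp only [hS, Finset.mem_filter, Finset.mem_product, Finset.mem_range]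
      exact ⟨⟨by omega, by omega, by omega, by omega⟩, by simp⟩
    -- the term at v0
    obtain ⟨m0, hm0eq, hm0nd'⟩ := qbinom_div_eq hq (-(a + b + 1 : ℤ)) n
    have hm0nd : ¬ (q : ℤ) ∣ m0 := by
      apply hm0nd'
      rw [Int.dvd_neg]
      exact_mod_cast hnd
    have hcastc : ((-(a + b + 1 : ℤ) : ℤ) : ℚ) / q = -((a : ℚ) + b + 1) / q := by
      push_cast; ring
    rw [hcastc] at hm0eq
    have h0 : ∀ α : ℚ, qbinom α 0 = 1 := fun α => by simp [qbinom]
    have hTv0 : f (0, 0, 0, n) = ((-1 : ℤ) ^ n * m0 : ℤ) / (q : ℚ) ^ N := by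
      have hfv : f (0, 0, 0, n) = (-1 : ℚ) ^ (0 + 0 + 0 + n) *
          qbinom ((a : ℚ) / q) 0 * qbinom ((b : ℚ) / q) 0 *
          qbinom (1 / q) 0 * qbinom (-((a : ℚ) + b + 1) / q) n := rfl
      rw [hfv, h0, h0, h0, hm0eq, hN, hV]
      push_cast
      ring
    -- the other terms
    have hrest : ∀ v ∈ S.erase (0, 0, 0, n),
        ∃ m : ℤ, (q : ℤ) ∣ m ∧ f v = m / (q : ℚ) ^ N := by
      rintro ⟨i, j, k, l⟩ hv
      have hne := Finset.ne_of_mem_erase hv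
      have hvS := Finset.mem_of_mem_erase hv
      simp only [hS, Finset.mem_filter] at hvS
      obtain ⟨-, heq⟩ := hvS
      have heq' : p * i + p ^ 2 * j + p ^ 3 * k + l = n := heq
      have hijk : 1 ≤ i + j + k := by
        by_contra hcon
        push_neg at hcon
        have hi : i = 0 := by omega
        have hj : j = 0 := by omega
        have hk : k = 0 := by omega
        subst hi; subst hj; subst hk
        have hl : l = n := by simpa using heq'
        exact hne (by rw [hl])
      have h1 : 3 * i ≤ p * i := Nat.mul_le_mul_right i hp3
      have hpp2 : 3 ≤ p ^ 2 := le_trans hp3 (Nat.le_self_pow two_ne_zero p)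
      have hpp3 : 3 ≤ p ^ 3 := le_trans hp3 (Nat.le_self_pow three_ne_zero p)
      have h2 : 3 * j ≤ p ^ 2 * j := Nat.mul_le_mul_right j hpp2
      have h3 : 3 * k ≤ p ^ 3 * k := Nat.mul_le_mul_right k hpp3
      have hs : i + j + k + l + 1 ≤ n := by omega
      have hdvd4 : Nat.factorial i * Nat.factorial j * Nat.factorial k * Nat.factorial l ∣
          Nat.factorial n := by
        calc Nat.factorial i * Nat.factorial j * Nat.factorial k * Nat.factorial l
            ∣ Nat.factorial (i + j) * Nat.factorial k * Nat.factorial l :=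
              mul_dvd_mul_right (mul_dvd_mul_right
                (Nat.factorial_mul_factorial_dvd_factorial_add i j) _) _
          _ ∣ Nat.factorial (i + j + k) * Nat.factorial l :=
              mul_dvd_mul_right (Nat.factorial_mul_factorial_dvd_factorial_add _ k) _
          _ ∣ Nat.factorial (i + j + k + l) :=
              Nat.factorial_mul_factorial_dvd_factorial_add _ l
          _ ∣ Nat.factorial n := Nat.factorial_dvd_factorial (by omega)
      have hvalsum : padicValNat q (Nat.factorial i) + padicValNat q (Nat.factorial j) +
          padicValNat q (Nat.factorial k) + padicValNat q (Nat.factorial l) ≤ V := by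
        have hne1 : Nat.factorial i ≠ 0 := Nat.factorial_ne_zero i
        have hne2 : Nat.factorial j ≠ 0 := Nat.factorial_ne_zero j
        have hne3 : Nat.factorial k ≠ 0 := Nat.factorial_ne_zero k
        have hne4 : Nat.factorial l ≠ 0 := Nat.factorial_ne_zero l
        have hm := mono _ _ hdvd4 (Nat.factorial_ne_zero n)
        rwa [padicValNat.mul (by positivity) hne4, padicValNat.mul (by positivity) hne3,
          padicValNat.mul hne1 hne2] at hm
      obtain ⟨ma, hmaeq, -⟩ := qbinom_div_eq hq (a : ℤ) i
      obtain ⟨mb, hmbeq, -⟩ := qbinom_div_eq hq (b : ℤ) j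
      obtain ⟨m1, hm1eq, -⟩ := qbinom_div_eq hq (1 : ℤ) k
      obtain ⟨mc, hmceq, -⟩ := qbinom_div_eq hq (-(a + b + 1 : ℤ)) l
      rw [show (((a : ℤ) : ℚ)) / q = (a : ℚ) / q by push_cast; ring] at hmaeq
      rw [show (((b : ℤ) : ℚ)) / q = (b : ℚ) / q by push_cast; ring] at hmbeq
      rw [show (((1 : ℤ) : ℚ)) / q = 1 / q by push_cast; ring] at hm1eq
      rw [show ((-(a + b + 1 : ℤ) : ℤ) : ℚ) / q = -((a : ℚ) + b + 1) / q by push_cast; ring]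
        at hmceq
      set E := (i + padicValNat q (Nat.factorial i)) + (j + padicValNat q (Nat.factorial j)) +
        (k + padicValNat q (Nat.factorial k)) + (l + padicValNat q (Nat.factorial l)) with hE
      have hEN : E + 1 ≤ N := by rw [hE, hN]; omega
      refine ⟨(-1 : ℤ) ^ (i + j + k + l) * (ma * mb * m1 * mc) * (q : ℤ) ^ (N - E), ?_, ?_⟩
      · exact Dvd.dvd.mul_left (dvd_pow_self (q : ℤ) (by omega)) _
      · have hfv : f (i, j, k, l) = (-1 : ℚ) ^ (i + j + k + l) *
            qbinom ((a : ℚ) / q) i * qbinom ((b : ℚ) / q) j *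
            qbinom (1 / q) k * qbinom (-((a : ℚ) + b + 1) / q) l := rfl
        rw [hfv, hmaeq, hmbeq, hm1eq, hmceq]
        have hqN : (q : ℚ) ^ N = (q : ℚ) ^ E * (q : ℚ) ^ (N - E) := by
          rw [← pow_add]
          congr 1
          omega
        rw [hqN, hE]
        push_cast
        field_simp
        ring
    obtain ⟨M', hM'd, hM'eq⟩ := sum_int_div (S.erase (0, 0, 0, n)) f (q : ℚ) N (q : ℤ) hrest
    refine ⟨(-1 : ℤ) ^ n * m0 + M', ?_, ?_⟩
    · intro hdvd
      have h1 : (q : ℤ) ∣ (-1 : ℤ) ^ n * m0 := by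
        have hsub := dvd_sub hdvd hM'd
        simpa using hsub
      have h2 : (q : ℤ) ∣ m0 := by
        have heq2 : ((-1 : ℤ) ^ n) * ((-1 : ℤ) ^ n * m0) = m0 := by
          rw [← mul_assoc, ← pow_add, Even.neg_one_pow ⟨n, by ring⟩, one_mul]
        exact heq2 ▸ Dvd.dvd.mul_left h1 _
      exact hm0nd h2
    · rw [hrB, ← Finset.sum_erase_add S f hv0, hM'eq, hTv0]
      push_cast
      ring
  obtain ⟨M, hMnd, hMeq⟩ := claim
  have hM0 : M ≠ 0 := by rintro rfl; exact hMnd (dvd_zero _)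
  have hMQ0 : (M : ℚ) ≠ 0 := Int.cast_ne_zero.mpr hM0
  have hqN0 : (q : ℚ) ^ N ≠ 0 := pow_ne_zero _ hq0
  have hB0 : rungeCoeffB p q a b n ≠ 0 := by
    rw [hMeq]
    exact div_ne_zero hMQ0 hqN0
  refine ⟨?_, hB0, ?_⟩
  · rw [hMeq, padicValRat.div hMQ0 hqN0]
    have h1 : padicValRat q (M : ℚ) = 0 := by
      rw [padicValRat.of_int, padicValInt.eq_zero_of_not_dvd hMnd]
      simp
    have h2 : padicValRat q ((q : ℚ) ^ N) = N := by
      rw [padicValRat.pow (q : ℚ), padicValRat.self hq.one_lt, mul_one]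
    rw [h1, h2, hN]
    push_cast
    ring
  · have hVle : V ≤ n / (q - 1) := by
      have hleg := sub_one_mul_padicValNat_factorial (p := q) n
      have h1 : (q - 1) * V ≤ n := by
        rw [hV, hleg]; omega
      exact (Nat.le_div_iff_mul_le (by have := hq.two_le; omega)).mpr
        (by rw [mul_comm]; exact h1)
    refine ⟨M * (q : ℤ) ^ (n / (q - 1) - V), ?_⟩
    rw [hMeq]
    have hexp : n + n / (q - 1) = N + (n / (q - 1) - V) := by
      rw [hN]; omega
    rw [hexp, pow_add]
    push_cast
    field_simp
end
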